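/- Let k ∈ {1, …, d−1} and suppose ω = Σ_I ω_I dx^I is a Lipschitz differential k-form on [0,1]^d (each ω_I Lipschitz) with dω = η a.e., where η = η₁ dx₁ ∧ ⋯ ∧ dx_{k+1} and η₁ ∈ L^∞ depends only on the first k+1 coordinates. Then, setting π_i : [0,1]^{k+1} → ℝ^{k+1} by π_i^i = (−1)^{i−1} ω_{I^i}|_{[0,1]^{k+1}} and π_i^j = x_j for j ≠ i (where I^i = (1,…,i−1,i+1,…,k+1)), the maps π₁, …, π_{k+1} are Lipschitz and satisfy Σ_{i=1}^{k+1} det Dπ_i = η₁ a.e. on almost every (k+1)-dimensional coordinate section, in particular on at least one such section. Hence non-existence of Lipschitz solutions of the sum-of-Jacobians equation in dimension k+1 implies non-existence of Lipschitz solutions ω of dω = η. -/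

import Mathlib

open MeasureTheory
open scoped NNReal BigOperators

private lemma det_updateRow_one_aux {n : ℕ} (i : Fin n) (r : Fin n → ℝ) :
    (Matrix.updateRow (1 : Matrix (Fin n) (Fin n) ℝ) i r).det = r i := by
  rw [← Matrix.det_transpose, ← Matrix.updateCol_transpose, Matrix.transpose_one,
    ← Matrix.cramer_apply, Matrix.cramer_one]
  rfl

/-- Let `1 ≤ k ≤ d − 1`, write `d = (k+1) + m`, and suppose
`ω = Σ_I ω_I dx^I` is a Lipschitz `k`-form on `[0,1]^d` satisfying `dω = η` a.e.,
where `η = η₁ dx₁ ∧ ⋯ ∧ dx_{k+1}` with `η₁ ∈ L^∞` depending only on the first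
`k+1` coordinates.  Projecting `dω = η` onto `dx₁ ∧ ⋯ ∧ dx_{k+1}` gives (with
`w j = ω_{I^j}`) the a.e. identity `Σ_j (−1)^{j−1} ∂w_j/∂x_j = η₁` on
`[0,1]^{k+1} × [0,1]^m`; this is the hypothesis `heq` below.  Then, setting
`π_i : [0,1]^{k+1} → ℝ^{k+1}`, `π_i^i = (−1)^{i−1} w_i(·, y)` and `π_i^j = x_j`
for `j ≠ i`, for almost every section parameter `y` the maps `π_i` are Lipschitz
and satisfy `Σ_i det Dπ_i = η₁` a.e. on `[0,1]^{k+1}`. -/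
theorem statement18 (k m : ℕ) (hk : 1 ≤ k)
    (w : Fin (k + 1) → ((Fin (k + 1) → ℝ) × (Fin m → ℝ)) → ℝ)
    (hw : ∀ j, ∃ C : ℝ≥0, LipschitzWith C (w j))
    (η : (Fin (k + 1) → ℝ) → ℝ)
    (hη : Measurable η) (hηb : ∃ C : ℝ, ∀ x, |η x| ≤ C)
    (A : Set (Fin (k + 1) → ℝ)) (hA : A = {x | ∀ j, 0 ≤ x j ∧ x j ≤ 1})
    (B : Set (Fin m → ℝ)) (hB : B = {y | ∀ j, 0 ≤ y j ∧ y j ≤ 1})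
    (heq : ∀ᵐ p ∂(volume.restrict (A ×ˢ B)),
      ∑ j : Fin (k + 1),
        (-1 : ℝ) ^ (j : ℕ) * fderiv ℝ (w j) p ((Pi.single j 1 : Fin (k + 1) → ℝ), 0)
        = η p.1) :
    ∀ᵐ y ∂(volume.restrict B),
      (∀ i : Fin (k + 1), ∃ C : ℝ≥0,
        LipschitzWith C fun x : Fin (k + 1) → ℝ =>
          Function.update x i ((-1 : ℝ) ^ (i : ℕ) * w i (x, y))) ∧
      ∀ᵐ x ∂(volume.restrict A),
        ∑ i : Fin (k + 1),
          (fderiv ℝ (fun x' : Fin (k + 1) → ℝ =>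
            Function.update x' i ((-1 : ℝ) ^ (i : ℕ) * w i (x', y))) x).det
          = η x := by
  classical
  haveI : (volume : Measure ((Fin (k + 1) → ℝ) × (Fin m → ℝ))).IsAddHaarMeasure := by
    rw [Measure.volume_eq_prod]; exact Measure.prod.instIsAddHaarMeasure _ _
  -- Rademacher: all `w j` are differentiable a.e.
  have hdiff : ∀ᵐ p ∂(volume : Measure ((Fin (k + 1) → ℝ) × (Fin m → ℝ))),
      ∀ j, DifferentiableAt ℝ (w j) p := by
    rw [ae_all_iff]
    intro j
    obtain ⟨C, hC⟩ := hw j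
    exact hC.ae_differentiableAt
  have H : ∀ᵐ p ∂(volume.restrict (A ×ˢ B)),
      (∀ j, DifferentiableAt ℝ (w j) p) ∧
      ∑ j : Fin (k + 1),
        (-1 : ℝ) ^ (j : ℕ) * fderiv ℝ (w j) p ((Pi.single j 1 : Fin (k + 1) → ℝ), 0)
        = η p.1 := (ae_restrict_of_ae hdiff).and heq
  rw [Measure.volume_eq_prod, ← Measure.prod_restrict] at H
  have Hswap : ∀ᵐ z ∂((volume.restrict B).prod (volume.restrict A)),
      (∀ j, DifferentiableAt ℝ (w j) (z.2, z.1)) ∧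
      ∑ j : Fin (k + 1),
        (-1 : ℝ) ^ (j : ℕ) * fderiv ℝ (w j) (z.2, z.1)
            ((Pi.single j 1 : Fin (k + 1) → ℝ), 0)
        = η z.2 :=
    (Measure.measurePreserving_swap.quasiMeasurePreserving.tendsto_ae).eventually H
  have H2 := Measure.ae_ae_of_ae_prod Hswap
  filter_upwards [H2] with y hy
  constructor
  · -- Lipschitz bounds, valid for every `y`
    intro i
    obtain ⟨C, hC⟩ := hw i
    refine ⟨max 1 C, LipschitzWith.of_dist_le_mul fun x x' => ?_⟩
    have hnn : (0 : ℝ) ≤ (max 1 C : ℝ≥0) * dist x x' := by positivity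
    rw [dist_pi_le_iff hnn]
    intro b
    rcases eq_or_ne b i with rfl | hb
    · simp only [Function.update_self]
      have h1 : dist ((-1 : ℝ) ^ (b : ℕ) * w b (x, y)) ((-1 : ℝ) ^ (b : ℕ) * w b (x', y))
          = dist (w b (x, y)) (w b (x', y)) := by
        rw [Real.dist_eq, Real.dist_eq, ← mul_sub, abs_mul, abs_pow, abs_neg, abs_one,
          one_pow, one_mul]
      rw [h1]
      calc dist (w b (x, y)) (w b (x', y)) ≤ C * dist (x, y) (x', y) := hC.dist_le_mul _ _
        _ = C * dist x x' := by
            rw [Prod.dist_eq]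
            simp [max_eq_left dist_nonneg]
        _ ≤ (max 1 C : ℝ≥0) * dist x x' := by
            apply mul_le_mul_of_nonneg_right _ dist_nonneg
            exact_mod_cast le_max_right (1 : ℝ≥0) C
    · simp only [Function.update_of_ne hb]
      calc dist (x b) (x' b) ≤ dist x x' := dist_le_pi_dist x x' b
        _ ≤ (max 1 C : ℝ≥0) * dist x x' := by
            apply le_mul_of_one_le_left dist_nonneg
            exact_mod_cast le_max_left (1 : ℝ≥0) C
  · -- a.e. identity for the sum of Jacobians
    filter_upwards [hy] with x hx
    obtain ⟨hdiffs, hsum⟩ := hx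
    have key : ∀ i : Fin (k + 1),
        (fderiv ℝ (fun x' : Fin (k + 1) → ℝ =>
            Function.update x' i ((-1 : ℝ) ^ (i : ℕ) * w i (x', y))) x).det
        = (-1 : ℝ) ^ (i : ℕ) *
            fderiv ℝ (w i) (x, y) ((Pi.single i 1 : Fin (k + 1) → ℝ), 0) := by
      intro i
      set c : ℝ := (-1 : ℝ) ^ (i : ℕ) with hc
      set L := fderiv ℝ (w i) (x, y) with hL
      set J : (Fin (k + 1) → ℝ) →L[ℝ] ((Fin (k + 1) → ℝ) × (Fin m → ℝ)) :=
        (ContinuousLinearMap.id ℝ (Fin (k + 1) → ℝ)).prod 0 with hJdef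
      have hJ : HasFDerivAt (fun x' : Fin (k + 1) → ℝ =>
          ((x', y) : (Fin (k + 1) → ℝ) × (Fin m → ℝ))) J x :=
        (hasFDerivAt_id x).prodMk (hasFDerivAt_const y x)
      have hwi : HasFDerivAt (fun x' : Fin (k + 1) → ℝ => w i (x', y)) (L.comp J) x :=
        ((hdiffs i).hasFDerivAt).comp x hJ
      have hci : HasFDerivAt (fun x' : Fin (k + 1) → ℝ => c * w i (x', y))
          (c • (L.comp J)) x := hwi.const_mul c
      set Φ : (Fin (k + 1) → ℝ) →L[ℝ] (Fin (k + 1) → ℝ) :=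
        ContinuousLinearMap.pi (fun j => if j = i then c • (L.comp J)
          else ContinuousLinearMap.proj j) with hΦ
      have hF : HasFDerivAt (fun x' : Fin (k + 1) → ℝ =>
          Function.update x' i (c * w i (x', y))) Φ x := by
        rw [hasFDerivAt_pi']
        intro j
        rw [hΦ, ContinuousLinearMap.proj_pi]
        by_cases h : j = i
        · subst h
          simp only [if_pos rfl, Function.update_self]
          exact hci
        · simp only [if_neg h]
          have heqf : (fun x' : Fin (k + 1) → ℝ =>
              Function.update x' i (c * w i (x', y)) j) = fun x' => x' j := by
            ext x'
            exact Function.update_of_ne h _ _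
          rw [heqf]
          exact (ContinuousLinearMap.proj (R := ℝ) (φ := fun _ : Fin (k + 1) => ℝ) j).hasFDerivAt
      rw [hF.fderiv]
      have hdet : Φ.det = LinearMap.det (Φ : (Fin (k + 1) → ℝ) →ₗ[ℝ] (Fin (k + 1) → ℝ)) := rfl
      rw [hdet, ← LinearMap.det_toMatrix (Pi.basisFun ℝ (Fin (k + 1)))]
      have hM : LinearMap.toMatrix (Pi.basisFun ℝ (Fin (k + 1))) (Pi.basisFun ℝ (Fin (k + 1)))
            (Φ : (Fin (k + 1) → ℝ) →ₗ[ℝ] (Fin (k + 1) → ℝ))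
          = Matrix.updateRow (1 : Matrix (Fin (k + 1)) (Fin (k + 1)) ℝ) i
              (fun b => c * L ((Pi.single b 1 : Fin (k + 1) → ℝ), 0)) := by
        ext a b
        rw [LinearMap.toMatrix_apply]
        simp only [Pi.basisFun_repr, Pi.basisFun_apply, ContinuousLinearMap.coe_coe]
        rw [hΦ]
        rcases eq_or_ne a i with rfl | ha
        · simp only [ContinuousLinearMap.pi_apply, if_pos rfl, Matrix.updateRow_self]
          simp [hJdef]
        · simp only [ContinuousLinearMap.pi_apply, if_neg ha,
            Matrix.updateRow_ne ha, ContinuousLinearMap.proj_apply]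
          simp [Pi.single_apply, Matrix.one_apply, eq_comm]
      rw [hM, det_updateRow_one_aux]
    calc ∑ i : Fin (k + 1),
          (fderiv ℝ (fun x' : Fin (k + 1) → ℝ =>
            Function.update x' i ((-1 : ℝ) ^ (i : ℕ) * w i (x', y))) x).det
        = ∑ i : Fin (k + 1), (-1 : ℝ) ^ (i : ℕ) *
            fderiv ℝ (w i) (x, y) ((Pi.single i 1 : Fin (k + 1) → ℝ), 0) :=
          Finset.sum_congr rfl fun i _ => key i
      _ = η x := hsum
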